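/- Let k ⊆ L be an extension of fields of characteristic 0, and F, G ∈ k[X,Y]. Assume there exist A, B ∈ L[X,Y] with A(F,G)=X, B(F,G)=Y, F(A,B)=X, G(A,B)=Y (all identities in L[X,Y]). Then A and B have all coefficients in k, i.e., A, B ∈ k[X,Y]. -/

import Mathlib

open MvPolynomial

section Aux

variable {k L : Type*} [Field k] [Field L] [Algebra k L]

/-- Apply a `k`-linear map to the coefficients of a multivariate polynomial. -/
noncomputable def stmt7.mapCoeffs {σ : Type*} (p : L →ₗ[k] L) (P : MvPolynomial σ L) :
    MvPolynomial σ L :=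
  AddMonoidAlgebra.ofCoeff (Finsupp.mapRange p p.map_zero (AddMonoidAlgebra.coeff P))

lemma stmt7.coeff_mapCoeffs {σ : Type*} (p : L →ₗ[k] L) (P : MvPolynomial σ L)
    (n : σ →₀ ℕ) : coeff n (stmt7.mapCoeffs p P) = p (coeff n P) := rfl

lemma stmt7.mapCoeffs_add {σ : Type*} (p : L →ₗ[k] L) (P Q : MvPolynomial σ L) :
    stmt7.mapCoeffs p (P + Q) = stmt7.mapCoeffs p P + stmt7.mapCoeffs p Q := by
  apply MvPolynomial.ext
  intro n
  simp [stmt7.coeff_mapCoeffs, MvPolynomial.coeff_add]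

lemma stmt7.mapCoeffs_C_mul_map {σ : Type*} (p : L →ₗ[k] L)
    (hp : ∀ (c : L) (a : k), p (c * algebraMap k L a) = p c * algebraMap k L a)
    (c : L) (N : MvPolynomial σ k) :
    stmt7.mapCoeffs p (C c * map (algebraMap k L) N)
      = C (p c) * map (algebraMap k L) N := by
  apply MvPolynomial.ext
  intro n
  rw [stmt7.coeff_mapCoeffs, coeff_C_mul, coeff_C_mul, coeff_map, hp]

end Aux

/-- If `F, G ∈ k[X,Y]` admit polynomial inverses `A, B` with coefficients in an
extension field `L ⊇ k`, then in fact `A, B ∈ k[X,Y]`. -/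
theorem stmt7 (k L : Type*) [Field k] [Field L] [CharZero k] [Algebra k L]
    (F G : MvPolynomial (Fin 2) k) (A B : MvPolynomial (Fin 2) L)
    (hA : aeval ![map (algebraMap k L) F, map (algebraMap k L) G] A = X 0)
    (hB : aeval ![map (algebraMap k L) F, map (algebraMap k L) G] B = X 1)
    (hF : aeval ![A, B] (map (algebraMap k L) F) = X 0)
    (hG : aeval ![A, B] (map (algebraMap k L) G) = X 1) :
    ∃ A₀ B₀ : MvPolynomial (Fin 2) k,
      A = map (algebraMap k L) A₀ ∧ B = map (algebraMap k L) B₀ := by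
  set e := algebraMap k L with he
  -- a k-linear retraction π : L → k of the inclusion
  obtain ⟨π, hπ⟩ := LinearMap.exists_leftInverse_of_injective (Algebra.linearMap k L)
    (LinearMap.ker_eq_bot.mpr (algebraMap k L).injective)
  have hπ' : ∀ a : k, π (e a) = a := fun a => LinearMap.congr_fun hπ a
  set p : L →ₗ[k] L := (Algebra.linearMap k L).comp π with hpdef
  have hp_apply : ∀ c : L, p c = e (π c) := fun c => rfl
  have hp : ∀ (c : L) (a : k), p (c * e a) = p c * e a := by
    intro c a
    have : c * e a = a • c := by
      rw [Algebra.smul_def]; ring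
    rw [this, map_smul, hp_apply, Algebra.smul_def]
    exact mul_comm _ _
  set Fb := map e F with hFb
  set Gb := map e G with hGb
  set Φ : MvPolynomial (Fin 2) L →ₐ[L] MvPolynomial (Fin 2) L := aeval ![Fb, Gb] with hΦ
  set Ψ : MvPolynomial (Fin 2) L →ₐ[L] MvPolynomial (Fin 2) L := aeval ![A, B] with hΨ
  -- Ψ is a left inverse of Φ
  have hΨΦ : ∀ P : MvPolynomial (Fin 2) L, Ψ (Φ P) = P := by
    have : Ψ.comp Φ = AlgHom.id L _ := by
      apply MvPolynomial.algHom_ext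
      intro i
      simp only [AlgHom.comp_apply, AlgHom.id_apply, hΦ, aeval_X]
      fin_cases i
      · exact hF
      · exact hG
    intro P
    calc Ψ (Φ P) = (Ψ.comp Φ) P := rfl
    _ = P := by rw [this]; rfl
  -- the key commutation : Φ commutes with mapCoeffs p
  have hcomm : ∀ P : MvPolynomial (Fin 2) L,
      Φ (stmt7.mapCoeffs p P) = stmt7.mapCoeffs p (Φ P) := by
    intro P
    induction P using MvPolynomial.induction_on' with
    | monomial u c =>
      have hmono : stmt7.mapCoeffs p (monomial u c) = monomial u (p c) := by
        apply MvPolynomial.ext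
        intro n
        rw [stmt7.coeff_mapCoeffs, coeff_monomial, coeff_monomial]
        split <;> simp
      have hM : (u.prod fun i n => (![Fb, Gb] i) ^ n)
          = map e (u.prod fun i n => (![F, G] i) ^ n) := by
        rw [Finsupp.prod, Finsupp.prod, map_prod]
        apply Finset.prod_congr rfl
        intro i _
        rw [map_pow]
        congr 1
        fin_cases i <;> simp [hFb, hGb]
      rw [hmono, hΦ, aeval_monomial, aeval_monomial, hM]
      have h0 : (algebraMap L (MvPolynomial (Fin 2) L)) = (C : L →+* _) := rfl
      rw [h0]
      rw [stmt7.mapCoeffs_C_mul_map p hp]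
    | add P Q hP hQ =>
      rw [stmt7.mapCoeffs_add, map_add, hP, hQ, map_add, stmt7.mapCoeffs_add]
  -- mapCoeffs p fixes X i
  have hX : ∀ i : Fin 2, stmt7.mapCoeffs p (X i : MvPolynomial (Fin 2) L) = X i := by
    intro i
    apply MvPolynomial.ext
    intro n
    have h1 : π (1 : L) = 1 := by simpa using hπ' 1
    rw [stmt7.coeff_mapCoeffs, coeff_X']
    split <;> simp [hp_apply, h1]
  -- the descended polynomials
  have key : ∀ (P : MvPolynomial (Fin 2) L) (i : Fin 2),
      Φ P = X i → ∃ P₀ : MvPolynomial (Fin 2) k, P = map e P₀ := by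
    intro P i hPi
    refine ⟨AddMonoidAlgebra.ofCoeff (Finsupp.mapRange π π.map_zero (AddMonoidAlgebra.coeff P)), ?_⟩
    have hmap : map e (AddMonoidAlgebra.ofCoeff (Finsupp.mapRange π π.map_zero (AddMonoidAlgebra.coeff P)) : MvPolynomial (Fin 2) k)
        = stmt7.mapCoeffs p P := by
      apply MvPolynomial.ext
      intro n
      rw [coeff_map, stmt7.coeff_mapCoeffs, hp_apply]
      rfl
    have : Φ (stmt7.mapCoeffs p P) = X i := by
      rw [hcomm, hPi, hX]
    have hPeq : Ψ (Φ (stmt7.mapCoeffs p P)) = Ψ (Φ P) := by rw [this, hPi]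
    rw [hΨΦ, hΨΦ] at hPeq
    rw [hmap]; exact hPeq.symm
  obtain ⟨A₀, hA₀⟩ := key A 0 hA
  obtain ⟨B₀, hB₀⟩ := key B 1 hB
  exact ⟨A₀, B₀, hA₀, hB₀⟩
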